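/- A finite group G has exactly |G| − 1 cyclic subgroups if and only if G is isomorphic to one of the following four groups: the cyclic group C₃ of order 3, the cyclic group C₄ of order 4, the symmetric group S₃ on three letters, or the dihedral group D₈ of order 8. -/

import Mathlib

section TarnauceanuAux

open Subgroup Finset

variable {G : Type*} [Group G]

lemma isCyclic_zpowers (g : G) : IsCyclic (zpowers g) := by
  refine ⟨⟨g, mem_zpowers g⟩, ?_⟩
  rintro ⟨x, hx⟩
  obtain ⟨k, rfl⟩ := mem_zpowers_iff.mp hx
  exact ⟨k, Subtype.ext (by simp)⟩

lemma isCyclic_iff_exists_zpowers_eq {H : Subgroup G} :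
    IsCyclic H ↔ ∃ g : G, zpowers g = H := by
  constructor
  · intro hH
    obtain ⟨h, hh⟩ := hH.exists_generator
    refine ⟨(h : G), le_antisymm (zpowers_le.mpr h.2) ?_⟩
    intro x hx
    obtain ⟨k, hk⟩ := mem_zpowers_iff.mp (hh ⟨x, hx⟩)
    exact mem_zpowers_iff.mpr ⟨k, by simpa using congrArg Subtype.val hk⟩
  · rintro ⟨g, rfl⟩
    exact _root_.isCyclic_zpowers g

variable [Fintype G] [DecidableEq G] [DecidableEq (Subgroup G)]

lemma card_fiber (g₀ : G) :
    (univ.filter fun g : G => zpowers g = zpowers g₀).card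
      = (Nat.card (zpowers g₀)).totient := by
  classical
  have hcyc : IsCyclic (zpowers g₀) := _root_.isCyclic_zpowers g₀
  have hd : Nat.card (zpowers g₀) ∣ Fintype.card (zpowers g₀) := by
    rw [Nat.card_eq_fintype_card]
  rw [← IsCyclic.card_orderOf_eq_totient (α := zpowers g₀) hd]
  apply Finset.card_bij (fun g hg => (⟨g, by
    have : zpowers g = zpowers g₀ := (mem_filter.mp hg).2
    exact this ▸ mem_zpowers g⟩ : zpowers g₀))
  · intro g hg
    have hzp : zpowers g = zpowers g₀ := (mem_filter.mp hg).2
    simp only [mem_filter, mem_univ, true_and]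
    rw [Subgroup.orderOf_mk, Nat.card_eq_fintype_card, ← Nat.card_eq_fintype_card,
      ← Nat.card_zpowers g, hzp]
  · intro a ha b hb hab
    exact congrArg Subtype.val hab
  · rintro ⟨h, hh⟩ hmem
    have hord : orderOf h = Nat.card (zpowers g₀) := by
      have := (mem_filter.mp hmem).2
      rwa [Subgroup.orderOf_mk] at this
    refine ⟨(h : G), ?_, rfl⟩
    simp only [mem_filter, mem_univ, true_and]
    refine Subgroup.eq_of_le_of_card_ge (zpowers_le.mpr hh) ?_
    rw [Nat.card_zpowers h, hord]

lemma key_count :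
    Nat.card {H : Subgroup G // IsCyclic H} = Nat.card G - 1 ↔
      Nat.card {g : G // g ^ 2 ≠ 1} = 2 := by
  classical
  set S : Finset (Subgroup G) := (univ : Finset G).image (fun g => zpowers g) with hS
  have hmemS : ∀ g : G, zpowers g ∈ S := fun g => mem_image_of_mem _ (mem_univ g)
  have hSgen : ∀ H ∈ S, ∃ g : G, zpowers g = H := by
    intro H hH
    obtain ⟨g, -, hg⟩ := mem_image.mp hH
    exact ⟨g, hg⟩
  have E1 : Fintype.card G = ∑ H ∈ S, (Nat.card H).totient := by
    rw [← card_univ, Finset.card_eq_sum_card_fiberwise (fun g _ => hmemS g)]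
    refine Finset.sum_congr rfl ?_
    intro H hH
    obtain ⟨g₀, rfl⟩ := hSgen H hH
    exact card_fiber g₀
  have cS : Nat.card {H : Subgroup G // IsCyclic H} = S.card := by
    have hset : {H : Subgroup G | IsCyclic H} = ↑S := by
      ext H
      simp only [Set.mem_setOf_eq, mem_coe, hS, mem_image, mem_univ, true_and]
      exact isCyclic_iff_exists_zpowers_eq
    have hcalc : Nat.card {H : Subgroup G // IsCyclic H}
        = Set.ncard {H : Subgroup G | IsCyclic H} := Nat.card_coe_set_eq _
    rw [hset, Set.ncard_coe_finset] at hcalc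
    exact hcalc
  have horder2 : ∀ g : G, g ^ 2 = 1 ↔ Nat.card (zpowers g) ≤ 2 := by
    intro g
    rw [Nat.card_zpowers]
    constructor
    · intro h
      exact Nat.le_of_dvd (by norm_num) (orderOf_dvd_of_pow_eq_one h)
    · intro h
      have h1 : 0 < orderOf g := orderOf_pos g
      have : orderOf g ∣ 2 := by
        rcases Nat.lt_or_ge (orderOf g) 2 with h' | h'
        · have : orderOf g = 1 := by omega
          simp [this]
        · have : orderOf g = 2 := le_antisymm h h'
          simp [this]
      exact orderOf_dvd_iff_pow_eq_one.mp this
  set S₂ : Finset (Subgroup G) := S.filter (fun H => Nat.card H ≤ 2) with hS₂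
  set S₃ : Finset (Subgroup G) := S.filter (fun H => ¬ Nat.card H ≤ 2) with hS₃
  have hS2sum : ∑ H ∈ S₂, (Nat.card H).totient = S₂.card := by
    rw [Finset.card_eq_sum_ones]
    refine Finset.sum_congr rfl ?_
    intro H hH
    have h2 : Nat.card H ≤ 2 := (mem_filter.mp hH).2
    have h1 : 0 < Nat.card H := Nat.card_pos
    exact Nat.totient_eq_one_iff.mpr (by omega)
  have E2 : (univ.filter fun g : G => g ^ 2 = 1).card = S₂.card := by
    rw [Finset.card_eq_sum_card_fiberwise (f := fun g : G => zpowers g) (t := S₂)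
      (fun g hg => mem_filter.mpr ⟨hmemS g, (horder2 g).mp (mem_filter.mp hg).2⟩)]
    rw [Finset.card_eq_sum_ones S₂]
    refine Finset.sum_congr rfl ?_
    intro H hH
    have h2 : Nat.card H ≤ 2 := (mem_filter.mp hH).2
    obtain ⟨g₀, rfl⟩ := hSgen H (mem_filter.mp hH).1
    have heq : ((univ.filter fun g : G => g ^ 2 = 1).filter
        (fun g => zpowers g = zpowers g₀)) = univ.filter (fun g => zpowers g = zpowers g₀) := by
      ext x
      simp only [mem_filter, mem_univ, true_and]
      exact ⟨fun h => h.2, fun hx => ⟨(horder2 x).mpr (hx ▸ h2), hx⟩⟩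
    rw [heq, card_fiber g₀]
    have h1 : 0 < Nat.card (zpowers g₀) := Nat.card_pos
    exact Nat.totient_eq_one_iff.mpr (by omega)
  have hsplitS : ∑ H ∈ S, (Nat.card H).totient
      = ∑ H ∈ S₂, (Nat.card H).totient + ∑ H ∈ S₃, (Nat.card H).totient :=
    (Finset.sum_filter_add_sum_filter_not S _ _).symm
  have hsplitG : (univ.filter fun g : G => g ^ 2 = 1).card
      + (univ.filter fun g : G => ¬ g ^ 2 = 1).card = Fintype.card G := by
    rw [Finset.card_filter_add_card_filter_not, card_univ]
  have E3 : (univ.filter fun g : G => ¬ g ^ 2 = 1).card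
      = ∑ H ∈ S₃, (Nat.card H).totient := by omega
  have htot2 : ∀ H ∈ S₃, 2 ≤ (Nat.card H).totient := by
    intro H hH
    have h3 : ¬ Nat.card H ≤ 2 := (mem_filter.mp hH).2
    have hpos : 0 < (Nat.card H).totient := Nat.totient_pos.mpr Nat.card_pos
    have hne1 : (Nat.card H).totient ≠ 1 := by
      simp only [ne_eq, Nat.totient_eq_one_iff]; omega
    omega
  have h2k : 2 * S₃.card ≤ ∑ H ∈ S₃, (Nat.card H).totient := by
    have := Finset.card_nsmul_le_sum S₃ (fun H => (Nat.card H).totient) 2 htot2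
    simpa [smul_eq_mul, mul_comm] using this
  have hScard : S.card = S₂.card + S₃.card :=
    (Finset.card_filter_add_card_filter_not (s := S)
      (p := fun H => Nat.card H ≤ 2)).symm
  have hRHS : Nat.card {g : G // g ^ 2 ≠ 1} = (univ.filter fun g : G => ¬ g ^ 2 = 1).card := by
    rw [Nat.card_eq_fintype_card, Fintype.card_subtype]
  have hposG : 1 ≤ Fintype.card G := Fintype.card_pos
  rw [cS, Nat.card_eq_fintype_card (α := G), hRHS, E3]
  rcases Nat.eq_zero_or_pos S₃.card with hk | hk
  · have hs0 : ∑ H ∈ S₃, (Nat.card H).totient = 0 := by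
      rw [Finset.card_eq_zero.mp hk, Finset.sum_empty]
    omega
  · omega


lemma exists_mulEquiv_dihedral {G : Type*} [Group G] [Finite G] {n : ℕ} [NeZero n]
    {c t : G} (hc : orderOf c = n) (ht2 : t ^ 2 = 1) (ht : t ∉ zpowers c)
    (hrel : t * c * t⁻¹ = c⁻¹) (hcard : Nat.card G = 2 * n) :
    Nonempty (G ≃* DihedralGroup n) := by
  classical
  set φ : ZMod n → G := fun i => c ^ i.val with hφ
  have hφ_add : ∀ i j : ZMod n, φ (i + j) = φ i * φ j := by
    intro i j
    show c ^ (i + j).val = c ^ i.val * c ^ j.val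
    rw [ZMod.val_add, ← pow_add]
    have h := pow_mod_orderOf c (i.val + j.val)
    rwa [hc] at h
  have hφ_zero : φ 0 = 1 := by
    show c ^ (0 : ZMod n).val = 1
    rw [ZMod.val_zero, pow_zero]
  have hφ_neg : ∀ i : ZMod n, φ (-i) = (φ i)⁻¹ := by
    intro i
    have : φ (-i) * φ i = 1 := by rw [← hφ_add, neg_add_cancel, hφ_zero]
    exact eq_inv_of_mul_eq_one_left this
  have hφ_sub : ∀ i j : ZMod n, φ (j - i) = (φ i)⁻¹ * φ j := by
    intro i j
    have hcomm : Commute ((φ i)⁻¹) (φ j) :=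
      (((Commute.refl c).pow_pow _ _).inv_left)
    rw [sub_eq_add_neg, add_comm, hφ_add, hφ_neg, hcomm.eq]
  have hti : t⁻¹ = t := by
    apply inv_eq_of_mul_eq_one_right
    rw [← sq]; exact ht2
  have h1 : t * c = c⁻¹ * t := by
    rw [← hrel]; group
  have h2 : c * t = t * c⁻¹ := by
    have : c * (t * c) * c⁻¹ = c * (c⁻¹ * t) * c⁻¹ := by rw [h1]
    calc c * t = c * (t * c) * c⁻¹ := by group
    _ = c * (c⁻¹ * t) * c⁻¹ := this
    _ = t * c⁻¹ := by group
  have hswap : ∀ k : ℕ, c ^ k * t = t * (c ^ k)⁻¹ := by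
    intro k
    induction k with
    | zero => simp
    | succ k ih =>
      rw [pow_succ, mul_assoc, h2, ← mul_assoc, ih]
      group
  have hswapφ : ∀ i : ZMod n, φ i * t = t * (φ i)⁻¹ := fun i => hswap i.val
  set f : DihedralGroup n → G := fun x =>
    match x with
    | DihedralGroup.r i => φ i
    | DihedralGroup.sr i => t * φ i with hf
  have hmul : ∀ a b : DihedralGroup n, f (a * b) = f a * f b := by
    rintro (i | i) (j | j)
    · show φ (i + j) = φ i * φ j
      exact hφ_add i j
    · show t * φ (j - i) = φ i * (t * φ j)
      rw [hφ_sub, ← mul_assoc, ← mul_assoc, hswapφ]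
    · show t * φ (i + j) = t * φ i * φ j
      rw [hφ_add, mul_assoc]
    · show φ (j - i) = t * φ i * (t * φ j)
      rw [hφ_sub]
      symm
      calc t * φ i * (t * φ j) = t * (φ i * t) * φ j := by group
      _ = t * (t * (φ i)⁻¹) * φ j := by rw [hswapφ]
      _ = (t * t) * ((φ i)⁻¹ * φ j) := by group
      _ = (φ i)⁻¹ * φ j := by rw [← sq, ht2, one_mul]
  have hφinj : Function.Injective φ := by
    intro i j hij
    have hvi : i.val < orderOf c := by rw [hc]; exact ZMod.val_lt i
    have hvj : j.val < orderOf c := by rw [hc]; exact ZMod.val_lt j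
    exact ZMod.val_injective n (pow_injOn_Iio_orderOf hvi hvj hij)
  have hφmem : ∀ i : ZMod n, φ i ∈ zpowers c := fun i => pow_mem (mem_zpowers c) _
  have hinj : Function.Injective f := by
    rintro (i | i) (j | j) hij
    · exact congrArg _ (hφinj hij)
    · exfalso
      apply ht
      have hij' : φ i = t * φ j := hij
      have : t = φ i * (φ j)⁻¹ := by
        rw [hij']; group
      rw [this]
      exact mul_mem (hφmem i) (inv_mem (hφmem j))
    · exfalso
      apply ht
      have hij' : t * φ i = φ j := hij
      have : t = φ j * (φ i)⁻¹ := by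
        rw [← hij']; group
      rw [this]
      exact mul_mem (hφmem j) (inv_mem (hφmem i))
    · have hij' : t * φ i = t * φ j := hij
      exact congrArg _ (hφinj (mul_left_cancel hij'))
  have : Fintype G := Fintype.ofFinite G
  have hbij : Function.Bijective f := by
    refine (Fintype.bijective_iff_injective_and_card f).mpr ⟨hinj, ?_⟩
    rw [DihedralGroup.card, ← Nat.card_eq_fintype_card (α := G), hcard]
  exact ⟨(MulEquiv.ofBijective (MonoidHom.mk' f hmul) hbij).symm⟩

lemma perm3_equiv_dihedral : Nonempty (Equiv.Perm (Fin 3) ≃* DihedralGroup 3) := by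
  have hfact : Fact (Nat.Prime 3) := ⟨by norm_num⟩
  have hc : orderOf (finRotate 3) = 3 := orderOf_eq_prime (by decide) (by decide)
  have ht2 : (Equiv.swap (0 : Fin 3) 1) ^ 2 = 1 := by decide
  have ht : Equiv.swap (0 : Fin 3) 1 ∉ zpowers (finRotate 3) := by
    intro h
    obtain ⟨k, hk⟩ := mem_zpowers_iff.mp h
    have hcomm : Commute (finRotate 3) (Equiv.swap (0 : Fin 3) 1) :=
      hk ▸ (Commute.refl (finRotate 3)).zpow_right k
    have hne : ¬ (finRotate 3 * Equiv.swap (0 : Fin 3) 1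
        = Equiv.swap (0 : Fin 3) 1 * finRotate 3) := by decide
    exact hne hcomm
  have hrel : Equiv.swap (0 : Fin 3) 1 * finRotate 3 * (Equiv.swap (0 : Fin 3) 1)⁻¹
      = (finRotate 3)⁻¹ := by decide
  have hcard : Nat.card (Equiv.Perm (Fin 3)) = 2 * 3 := by
    rw [Nat.card_eq_fintype_card]; decide
  exact exists_mulEquiv_dihedral hc ht2 ht hrel hcard

lemma sq_ne_one_card_congr {G K : Type*} [Group G] [Group K] (e : G ≃* K) :
    Nat.card {g : G // g ^ 2 ≠ 1} = Nat.card {k : K // k ^ 2 ≠ 1} := by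
  refine Nat.card_congr (Equiv.subtypeEquiv e.toEquiv ?_)
  intro a
  rw [not_iff_not]
  show a ^ 2 = 1 ↔ e a ^ 2 = 1
  rw [← map_pow]
  exact ⟨fun h => by rw [h, map_one], fun h => e.injective (h.trans (map_one e).symm)⟩

end TarnauceanuAux

open Subgroup

/-- T\u{a}rn\u{a}uceanu's theorem: a finite group `G` has exactly `|G| − 1` cyclic
subgroups if and only if `G` is isomorphic to `C₃`, `C₄`, `S₃`, or `D₈`. -/
theorem card_cyclic_eq_card_sub_one_iff (G : Type*) [Group G] [Finite G] :
    Nat.card {H : Subgroup G // IsCyclic H} = Nat.card G - 1 ↔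
      (Nonempty (G ≃* Multiplicative (ZMod 3)) ∨
       Nonempty (G ≃* Multiplicative (ZMod 4)) ∨
       Nonempty (G ≃* Equiv.Perm (Fin 3)) ∨
       Nonempty (G ≃* DihedralGroup 4)) := by
  classical
  letI : Fintype G := Fintype.ofFinite G
  rw [key_count]
  constructor
  · intro hE2
    have hEcard : (Finset.univ.filter fun x : G => x ^ 2 ≠ 1).card = 2 := by
      rw [← Fintype.card_subtype, ← Nat.card_eq_fintype_card]; exact hE2
    obtain ⟨g, hg⟩ : ∃ g : G, g ^ 2 ≠ 1 := by
      have hne : (Finset.univ.filter fun x : G => x ^ 2 ≠ 1).Nonempty := by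
        rw [← Finset.card_pos, hEcard]; norm_num
      obtain ⟨g, hg⟩ := hne
      exact ⟨g, (Finset.mem_filter.mp hg).2⟩
    have hginv_ne : g ≠ g⁻¹ := by
      intro hh
      apply hg
      rw [sq]
      nth_rewrite 2 [hh]
      simp
    have hginvmem : g⁻¹ ^ 2 ≠ 1 := by
      have h' : (g ^ 2)⁻¹ ≠ 1 := by simpa using hg
      rw [inv_pow]; exact h'
    have hpair : Finset.univ.filter (fun x : G => x ^ 2 ≠ 1) = {g, g⁻¹} := by
      symm
      apply Finset.eq_of_subset_of_card_le
      · exact Finset.insert_subset_iff.mpr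
          ⟨Finset.mem_filter.mpr ⟨Finset.mem_univ _, hg⟩,
           Finset.singleton_subset_iff.mpr (Finset.mem_filter.mpr ⟨Finset.mem_univ _, hginvmem⟩)⟩
      · rw [hEcard, Finset.card_insert_of_notMem (by simpa using hginv_ne),
          Finset.card_singleton]
    have hall : ∀ x : G, x ^ 2 ≠ 1 → x = g ∨ x = g⁻¹ := by
      intro x hx
      have hx' : x ∈ ({g, g⁻¹} : Finset G) :=
        hpair ▸ Finset.mem_filter.mpr ⟨Finset.mem_univ _, hx⟩
      simpa using hx'
    have hog_pos : 0 < orderOf g := orderOf_pos g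
    have hog1 : orderOf g ≠ 1 := by
      intro hh
      exact hg (by rw [orderOf_eq_one_iff.mp hh, one_pow])
    have hog2 : orderOf g ≠ 2 := by
      intro hh
      exact hg (by rw [← hh]; exact pow_orderOf_eq_one g)
    have hle4 : orderOf g ≤ 4 := by
      by_contra hgt
      push_neg at hgt
      have h4 : g ^ 4 ≠ 1 := pow_ne_one_of_lt_orderOf (by norm_num) hgt
      have hsq : (g ^ 2) ^ 2 ≠ 1 := by rw [← pow_mul]; exact h4
      rcases hall _ hsq with h' | h'
      · have hgg : g * g = g * 1 := by rw [mul_one, ← sq]; exact h'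
        exact hog1 (by rw [mul_left_cancel hgg, orderOf_one])
      · have h3 : g ^ 3 = 1 := by
          have hgm : g ^ 2 * g = 1 := by rw [h']; simp
          rw [pow_succ]; exact hgm
        have hd : orderOf g ∣ 3 := orderOf_dvd_of_pow_eq_one h3
        have := Nat.le_of_dvd (by norm_num) hd
        omega
    have hn34 : orderOf g = 3 ∨ orderOf g = 4 := by omega
    have hout : ∀ x : G, x ∉ zpowers g → x ^ 2 = 1 := by
      intro x hx
      by_contra hh
      rcases hall x hh with h' | h'
      · exact hx (h' ▸ mem_zpowers g)
      · exact hx (h' ▸ inv_mem (mem_zpowers g))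
    have hginv : ∀ x : G, x ∉ zpowers g → x * g * x⁻¹ = g⁻¹ := by
      intro x hx
      have hx2 : x ^ 2 = 1 := hout x hx
      have hu2 : (x * g * x⁻¹) ^ 2 ≠ 1 := by
        intro hh
        apply hg
        have hconj : (x * g * x⁻¹) ^ 2 = x * g ^ 2 * x⁻¹ := by rw [sq, sq]; group
        rw [hconj] at hh
        calc g ^ 2 = x⁻¹ * (x * g ^ 2 * x⁻¹) * x := by group
        _ = x⁻¹ * 1 * x := by rw [hh]
        _ = 1 := by group
      rcases hall _ hu2 with h' | h'
      · exfalso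
        have hcomm : x * g = g * x := by
          have h1 : x * g * x⁻¹ * x = g * x := by rw [h']
          calc x * g = x * g * x⁻¹ * x := by group
          _ = g * x := h1
        have hxg2 : (x * g) ^ 2 ≠ 1 := by
          intro hh
          apply hg
          have h1 : x * g * (x * g) = 1 := by rw [← sq]; exact hh
          calc g ^ 2 = x ^ 2 * g ^ 2 := by rw [hx2, one_mul]
          _ = x * (x * g) * g := by rw [sq, sq]; group
          _ = x * (g * x) * g := by rw [hcomm]
          _ = x * g * (x * g) := by group
          _ = 1 := h1
        rcases hall _ hxg2 with h'' | h''
        · apply hx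
          have hx1 : x * g = 1 * g := by rw [one_mul]; exact h''
          rw [mul_right_cancel hx1]
          exact one_mem _
        · apply hx
          have hxval : x = (x * g) * g⁻¹ := by group
          rw [h''] at hxval
          rw [hxval]
          exact mul_mem (inv_mem (mem_zpowers g)) (inv_mem (mem_zpowers g))
      · exact h'
    by_cases hcyc : ∀ x : G, x ∈ zpowers g
    · have hGcyc : IsCyclic G := ⟨g, hcyc⟩
      have htop : zpowers g = ⊤ := (Subgroup.eq_top_iff' _).mpr hcyc
      have hcard : Nat.card G = orderOf g := by
        have h1 := Nat.card_zpowers g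
        rw [htop, Subgroup.card_top] at h1
        exact h1
      rcases hn34 with h3 | h4
      · left
        rw [h3] at hcard
        exact ⟨(zmodCyclicMulEquiv hGcyc).symm.trans
          (AddEquiv.toMultiplicative (ZMod.ringEquivCongr hcard).toAddEquiv)⟩
      · right; left
        rw [h4] at hcard
        exact ⟨by rw [← hcard]; exact (zmodCyclicMulEquiv hGcyc).symm⟩
    · obtain ⟨t, ht⟩ := not_forall.mp hcyc
      have hidx : (zpowers g).index = 2 := by
        rw [Subgroup.index_eq_two_iff]
        refine ⟨t, fun b => ?_⟩
        by_cases hb : b ∈ zpowers g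
        · refine Or.inr ⟨hb, fun hbt => ht ?_⟩
          have htval : t = b⁻¹ * (b * t) := by group
          rw [htval]
          exact mul_mem (inv_mem hb) hbt
        · refine Or.inl ⟨?_, hb⟩
          by_contra hbt
          have e1 := hginv b hb
          have e2 := hginv t ht
          have e3 := hginv (b * t) hbt
          have hgeq : g⁻¹ = g := by
            calc g⁻¹ = (b * t) * g * (b * t)⁻¹ := e3.symm
            _ = b * (t * g * t⁻¹) * b⁻¹ := by group
            _ = b * g⁻¹ * b⁻¹ := by rw [e2]
            _ = (b * g * b⁻¹)⁻¹ := by group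
            _ = (g⁻¹)⁻¹ := by rw [e1]
            _ = g := by group
          apply hg
          rw [sq]
          nth_rewrite 2 [← hgeq]
          simp
      have hcardG : Nat.card G = 2 * orderOf g := by
        have h1 := Subgroup.card_mul_index (zpowers g)
        rw [Nat.card_zpowers, hidx] at h1
        omega
      have ht2 : t ^ 2 = 1 := hout t ht
      have hrel : t * g * t⁻¹ = g⁻¹ := hginv t ht
      rcases hn34 with h3 | h4
      · right; right; left
        rw [h3] at hcardG
        obtain ⟨e⟩ := exists_mulEquiv_dihedral h3 ht2 ht hrel hcardG
        obtain ⟨p⟩ := perm3_equiv_dihedral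
        exact ⟨e.trans p.symm⟩
      · right; right; right
        rw [h4] at hcardG
        obtain ⟨e⟩ := exists_mulEquiv_dihedral h4 ht2 ht hrel hcardG
        exact ⟨e⟩
  · intro h
    obtain h | h | h | h := h
    · obtain ⟨e⟩ := h
      rw [sq_ne_one_card_congr e, Nat.card_eq_fintype_card]; decide
    · obtain ⟨e⟩ := h
      rw [sq_ne_one_card_congr e, Nat.card_eq_fintype_card]; decide
    · obtain ⟨e⟩ := h
      rw [sq_ne_one_card_congr e, Nat.card_eq_fintype_card]; decide
    · obtain ⟨e⟩ := h
      rw [sq_ne_one_card_congr e, Nat.card_eq_fintype_card]; decide
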